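/- Let D₁ ⊆ ℂ be a domain biholomorphic to ℂ∗ := ℂ \ {0}. Then for any domain D₂ ⊆ ℂ, the Hahn and Kobayashi–Royden pseudometrics of the product coincide: h_{D₁×D₂} ≡ κ_{D₁×D₂}. -/

import Mathlib

open Set Metric Complex

noncomputable section

/-- The open unit disc `E` in `ℂ`. -/
def unitDisc : Set ℂ := Metric.ball (0 : ℂ) 1

/-- The Kobayashi–Royden pseudometric of a set `D` in a complex normed space:
`κ_D(z;X) = inf {|α| : ∃ holomorphic f : E → D, f(0) = z, α·f'(0) = X}`. -/
def kobayashi {V : Type*} [NormedAddCommGroup V] [NormedSpace ℂ V]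
    (D : Set V) (z X : V) : ℝ :=
  sInf {r : ℝ | ∃ (α : ℂ) (f : ℂ → V), ‖α‖ = r ∧
    DifferentiableOn ℂ f unitDisc ∧ MapsTo f unitDisc D ∧
    f 0 = z ∧ α • deriv f 0 = X}

/-- The Hahn pseudometric of a set `D` in a complex normed space:
`h_D(z;X) = inf {|α| : ∃ injective holomorphic f : E → D, f(0) = z, α·f'(0) = X}`. -/
def hahn {V : Type*} [NormedAddCommGroup V] [NormedSpace ℂ V]
    (D : Set V) (z X : V) : ℝ :=
  sInf {r : ℝ | ∃ (α : ℂ) (f : ℂ → V), ‖α‖ = r ∧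
    DifferentiableOn ℂ f unitDisc ∧ MapsTo f unitDisc D ∧ InjOn f unitDisc ∧
    f 0 = z ∧ α • deriv f 0 = X}

/-- `D₁` is biholomorphic to `D₂`: there is a holomorphic bijection `f : D₁ → D₂`
with holomorphic inverse. -/
def Biholomorphic (D₁ D₂ : Set ℂ) : Prop :=
  ∃ f g : ℂ → ℂ, DifferentiableOn ℂ f D₁ ∧ DifferentiableOn ℂ g D₂ ∧
    MapsTo f D₁ D₂ ∧ MapsTo g D₂ D₁ ∧
    (∀ z ∈ D₁, g (f z) = z) ∧ (∀ w ∈ D₂, f (g w) = w)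

lemma unitDisc_isOpen : IsOpen unitDisc := by unfold unitDisc; exact isOpen_ball

lemma zero_mem_unitDisc : (0:ℂ) ∈ unitDisc := by
  unfold unitDisc; exact mem_ball_self one_pos

lemma abs_lt_one_of_mem {a : ℂ} (h : a ∈ unitDisc) : ‖a‖ < 1 := by
  have := mem_ball.mp h
  rwa [Complex.dist_eq, sub_zero] at this

lemma diff_lt_two {a b : ℂ} (ha : a ∈ unitDisc) (hb : b ∈ unitDisc) :
    ‖a - b‖ < 2 := by
  calc ‖a - b‖ ≤ ‖a‖ + ‖b‖ := by
        exact norm_sub_le a b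
      _ < 2 := by linarith [abs_lt_one_of_mem ha, abs_lt_one_of_mem hb]

lemma two_lt_two_pi : (2:ℝ) < 2 * Real.pi := by nlinarith [Real.pi_gt_three]

lemma exp_inj_small {x y : ℂ} (h : Complex.exp x = Complex.exp y)
    (hxy : ‖x - y‖ < 2 * Real.pi) : x = y := by
  obtain ⟨n, hn⟩ := Complex.exp_eq_exp_iff_exists_int.mp h
  have hx : x - y = n * (2 * Real.pi * Complex.I) := by rw [hn]; ring
  have habs : ‖x - y‖ = |(n : ℝ)| * (2 * Real.pi) := by
    rw [hx, norm_mul]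
    simp [Complex.norm_intCast, abs_of_pos Real.pi_pos]
  have hn0 : n = 0 := by
    by_contra h0
    have h1 : (1 : ℝ) ≤ |(n : ℝ)| := by
      exact_mod_cast Int.one_le_abs (by exact_mod_cast h0)
    rw [habs] at hxy
    nlinarith [Real.pi_pos]
  rw [hn, hn0]; simp

/-- The main construction: `λ ↦ (φ (exp (u λ)), q λ)` is an injective competitor. -/
lemma helper (D₁ D₂ : Set ℂ) (φ : ℂ → ℂ)
    (hφd : DifferentiableOn ℂ φ {(0:ℂ)}ᶜ) (hφm : MapsTo φ {(0:ℂ)}ᶜ D₁)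
    (hφinj : InjOn φ {(0:ℂ)}ᶜ)
    (z X : ℂ × ℂ) (α : ℂ) (w₁ : ℂ) (hw₁ : w₁ ≠ 0) (hφw : φ w₁ = z.1)
    (u q : ℂ → ℂ) (du dq : ℂ)
    (hud : DifferentiableOn ℂ u unitDisc) (hqd : DifferentiableOn ℂ q unitDisc)
    (hqm : MapsTo q unitDisc D₂)
    (hexp : Complex.exp (u 0) = w₁) (hq0 : q 0 = z.2)
    (hu' : HasDerivAt u du 0) (hq' : HasDerivAt q dq 0)
    (hcouple : ∀ a ∈ unitDisc, ∀ b ∈ unitDisc,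
      Complex.exp (u a) = Complex.exp (u b) → q a = q b → a = b)
    (hX : α • ((deriv φ w₁ * (w₁ * du), dq) : ℂ × ℂ) = X) :
    ∃ (β : ℂ) (g : ℂ → ℂ × ℂ), ‖β‖ = ‖α‖ ∧
      DifferentiableOn ℂ g unitDisc ∧ MapsTo g unitDisc (D₁ ×ˢ D₂) ∧
      InjOn g unitDisc ∧ g 0 = z ∧ β • deriv g 0 = X := by
  have hexpne : ∀ t : ℂ, Complex.exp (u t) ∈ ({(0:ℂ)}ᶜ : Set ℂ) := fun t => by
    simp [Complex.exp_ne_zero]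
  have hφat : DifferentiableAt ℂ φ w₁ :=
    hφd.differentiableAt (isOpen_compl_singleton.mem_nhds (by simpa using hw₁))
  refine ⟨α, fun t => (φ (Complex.exp (u t)), q t), rfl, ?_, ?_, ?_, ?_, ?_⟩
  · exact DifferentiableOn.prodMk
      (hφd.comp (hud.cexp) (fun t _ => hexpne t)) hqd
  · intro t ht
    exact ⟨hφm (hexpne t), hqm ht⟩
  · intro a ha b hb hab
    have h1 : φ (Complex.exp (u a)) = φ (Complex.exp (u b)) := congrArg Prod.fst hab
    have h2 : q a = q b := congrArg Prod.snd hab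
    exact hcouple a ha b hb (hφinj (hexpne a) (hexpne b) h1) h2
  · show (φ (Complex.exp (u 0)), q 0) = z
    rw [hexp, hq0, hφw]
  · have hE : HasDerivAt (fun t => Complex.exp (u t)) (w₁ * du) 0 := by
      have := hu'.cexp
      rwa [hexp] at this
    have hg1 : HasDerivAt (fun t => φ (Complex.exp (u t))) (deriv φ w₁ * (w₁ * du)) 0 :=
      HasDerivAt.comp 0 (hexp ▸ hφat.hasDerivAt) hE
    have hg : HasDerivAt (fun t => (φ (Complex.exp (u t)), q t))
        ((deriv φ w₁ * (w₁ * du), dq) : ℂ × ℂ) 0 := hg1.prodMk hq'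
    rw [hg.deriv]
    exact hX

/-- Case B: second derivative component zero, exponent slope `b ≠ 0`.
Second coordinate `z₂ + η (e^{bλ} - 1 - bλ)`. -/
lemma caseB (D₁ D₂ : Set ℂ) (φ : ℂ → ℂ)
    (hφd : DifferentiableOn ℂ φ {(0:ℂ)}ᶜ) (hφm : MapsTo φ {(0:ℂ)}ᶜ D₁)
    (hφinj : InjOn φ {(0:ℂ)}ᶜ)
    (z X : ℂ × ℂ) (α : ℂ) (w₁ : ℂ) (hw₁ : w₁ ≠ 0) (hφw : φ w₁ = z.1)
    (hexpu₀ : Complex.exp (Complex.log w₁) = w₁)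
    (r₂ : ℝ) (hr₂pos : 0 < r₂) (hball : Metric.ball z.2 r₂ ⊆ D₂)
    (b : ℂ) (hb : b ≠ 0)
    (hX : α • ((deriv φ w₁ * (w₁ * b), 0) : ℂ × ℂ) = X) :
    ∃ (β : ℂ) (g : ℂ → ℂ × ℂ), ‖β‖ = ‖α‖ ∧
      DifferentiableOn ℂ g unitDisc ∧ MapsTo g unitDisc (D₁ ×ˢ D₂) ∧
      InjOn g unitDisc ∧ g 0 = z ∧ β • deriv g 0 = X := by
  set M : ℝ := Real.exp (‖b‖) + 1 + ‖b‖ with hMdef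
  have hMpos : 0 < M := by
    have := Real.exp_pos (‖b‖)
    have := norm_nonneg b
    simp only [hMdef]
    positivity
  set ηr : ℝ := r₂ / (2 * M) with hηdef
  have hηpos : 0 < ηr := by positivity
  have hηne : ((ηr : ℂ)) ≠ 0 := by exact_mod_cast ne_of_gt hηpos
  refine helper D₁ D₂ φ hφd hφm hφinj z X α w₁ hw₁ hφw
    (fun t => Complex.log w₁ + b * t)
    (fun t => z.2 + (ηr : ℂ) * (Complex.exp (b * t) - 1 - b * t))
    b 0 ?_ ?_ ?_ (by simp [hexpu₀]) (by simp) ?_ ?_ ?_ hX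
  · apply DifferentiableOn.const_add
    exact differentiableOn_id.const_mul b
  · apply DifferentiableOn.const_add
    apply DifferentiableOn.const_mul
    exact ((differentiableOn_id.const_mul b).cexp.sub (differentiableOn_const 1)).sub
      (differentiableOn_id.const_mul b)
  · intro t ht
    apply hball
    rw [mem_ball, Complex.dist_eq]
    have habs_t : ‖t‖ ≤ 1 := le_of_lt (abs_lt_one_of_mem ht)
    have hbt : ‖b * t‖ ≤ ‖b‖ := by
      rw [norm_mul]
      nlinarith [norm_nonneg b, norm_nonneg t]
    have hexpbd : ‖Complex.exp (b * t)‖ ≤ Real.exp (‖b‖) := by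
      rw [Complex.norm_exp]
      apply Real.exp_le_exp.mpr
      exact le_trans (Complex.re_le_norm _) hbt
    have hEbd : ‖Complex.exp (b * t) - 1 - b * t‖ ≤ M := by
      have h1 : Complex.exp (b * t) - 1 - b * t = Complex.exp (b * t) - (1 + b * t) := by ring
      rw [h1]
      calc ‖Complex.exp (b * t) - (1 + b * t)‖
          ≤ ‖Complex.exp (b * t)‖ + ‖1 + b * t‖ := by
            have h := norm_add_le (Complex.exp (b * t)) (-(1 + b * t))
            rw [norm_neg] at h
            simpa [sub_eq_add_neg] using h
        _ ≤ Real.exp (‖b‖) + (1 + ‖b‖) := by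
            have : ‖1 + b * t‖ ≤ 1 + ‖b‖ := by
              calc ‖1 + b * t‖ ≤ ‖1‖ + ‖b * t‖ :=
                    norm_add_le _ _
                _ ≤ 1 + ‖b‖ := by rw [norm_one]; linarith
            linarith
        _ = M := by rw [hMdef]; ring
    have : z.2 + (ηr : ℂ) * (Complex.exp (b * t) - 1 - b * t) - z.2
        = (ηr : ℂ) * (Complex.exp (b * t) - 1 - b * t) := by ring
    rw [this, norm_mul]
    have : ‖(ηr : ℂ)‖ = ηr := by
      rw [Complex.norm_of_nonneg hηpos.le]
    rw [this]
    calc ηr * ‖Complex.exp (b * t) - 1 - b * t‖ ≤ ηr * M := by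
          nlinarith
      _ = r₂ / 2 := by rw [hηdef]; field_simp
      _ < r₂ := by linarith
  · have h : HasDerivAt (fun t : ℂ => Complex.log w₁ + b * t) (b * 1) 0 :=
      ((hasDerivAt_id 0).const_mul b).const_add _
    simpa using h
  · have hbt : HasDerivAt (fun t : ℂ => b * t) (b * 1) 0 := (hasDerivAt_id 0).const_mul b
    have hexp' : HasDerivAt (fun t : ℂ => Complex.exp (b * t))
        (Complex.exp (b * 0) * (b * 1)) 0 := hbt.cexp
    have hsub : HasDerivAt (fun t : ℂ => Complex.exp (b * t) - 1 - b * t)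
        (Complex.exp (b * 0) * (b * 1) - b * 1) 0 := (hexp'.sub_const 1).sub hbt
    have hmul : HasDerivAt (fun t : ℂ => (ηr : ℂ) * (Complex.exp (b * t) - 1 - b * t))
        ((ηr : ℂ) * (Complex.exp (b * 0) * (b * 1) - b * 1)) 0 := hsub.const_mul _
    have hq : HasDerivAt (fun t : ℂ => z.2 + (ηr : ℂ) * (Complex.exp (b * t) - 1 - b * t))
        ((ηr : ℂ) * (Complex.exp (b * 0) * (b * 1) - b * 1)) 0 := hmul.const_add _
    have : ((ηr : ℂ) * (Complex.exp (b * 0) * (b * 1) - b * 1)) = 0 := by simp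
    rwa [this] at hq
  · intro a ha c hc h1 h2
    rw [Complex.exp_add, Complex.exp_add] at h1
    have hE : Complex.exp (b * a) = Complex.exp (b * c) :=
      mul_left_cancel₀ (Complex.exp_ne_zero _) h1
    have h3 : (ηr : ℂ) * (Complex.exp (b * a) - 1 - b * a)
        = (ηr : ℂ) * (Complex.exp (b * c) - 1 - b * c) := by
      have := add_left_cancel h2
      exact this
    have h4 : Complex.exp (b * a) - 1 - b * a = Complex.exp (b * c) - 1 - b * c :=
      mul_left_cancel₀ hηne h3
    rw [hE] at h4
    have h5 : b * a = b * c := sub_right_injective h4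
    exact mul_left_cancel₀ hb h5

/-- Case C: both derivative components vanish. Uses `u = log w₁ + λ²`, `q = z₂ + η λ³`. -/
lemma caseC (D₁ D₂ : Set ℂ) (φ : ℂ → ℂ)
    (hφd : DifferentiableOn ℂ φ {(0:ℂ)}ᶜ) (hφm : MapsTo φ {(0:ℂ)}ᶜ D₁)
    (hφinj : InjOn φ {(0:ℂ)}ᶜ)
    (z X : ℂ × ℂ) (α : ℂ) (w₁ : ℂ) (hw₁ : w₁ ≠ 0) (hφw : φ w₁ = z.1)
    (hexpu₀ : Complex.exp (Complex.log w₁) = w₁)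
    (r₂ : ℝ) (hr₂pos : 0 < r₂) (hball : Metric.ball z.2 r₂ ⊆ D₂)
    (hX : X = 0) :
    ∃ (β : ℂ) (g : ℂ → ℂ × ℂ), ‖β‖ = ‖α‖ ∧
      DifferentiableOn ℂ g unitDisc ∧ MapsTo g unitDisc (D₁ ×ˢ D₂) ∧
      InjOn g unitDisc ∧ g 0 = z ∧ β • deriv g 0 = X := by
  set k : ℝ := r₂ / 2 with hkdef
  have hkpos : 0 < k := by positivity
  have hkne : ((k : ℂ)) ≠ 0 := by exact_mod_cast ne_of_gt hkpos
  refine helper D₁ D₂ φ hφd hφm hφinj z X α w₁ hw₁ hφw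
    (fun t => Complex.log w₁ + t ^ 2)
    (fun t => z.2 + (k : ℂ) * t ^ 3)
    0 0 ?_ ?_ ?_ (by simp [hexpu₀]) (by simp) ?_ ?_ ?_ (by rw [hX]; simp)
  · exact (differentiableOn_id.pow 2).const_add _
  · exact ((differentiableOn_id.pow 3).const_mul _).const_add _
  · intro t ht
    apply hball
    rw [mem_ball, Complex.dist_eq]
    have h1 : z.2 + (k : ℂ) * t ^ 3 - z.2 = (k : ℂ) * t ^ 3 := by ring
    rw [h1, norm_mul]
    have h2 : ‖(k : ℂ)‖ = k := by
      rw [Complex.norm_of_nonneg hkpos.le]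
    rw [h2, norm_pow]
    have ht1 : ‖t‖ < 1 := abs_lt_one_of_mem ht
    have ht0 : 0 ≤ ‖t‖ := norm_nonneg t
    have : ‖t‖ ^ 3 < 1 := pow_lt_one₀ ht0 ht1 (by norm_num)
    calc k * ‖t‖ ^ 3 < k * 1 := by nlinarith
      _ = r₂ / 2 := by rw [hkdef]; ring
      _ < r₂ := by linarith
  · have h : HasDerivAt (fun t : ℂ => Complex.log w₁ + t ^ 2)
        ((2 : ℕ) * (0:ℂ) ^ (2 - 1)) 0 := (hasDerivAt_pow 2 (0:ℂ)).const_add _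
    simpa using h
  · have h : HasDerivAt (fun t : ℂ => z.2 + (k : ℂ) * t ^ 3)
        ((k : ℂ) * ((3 : ℕ) * (0:ℂ) ^ (3 - 1))) 0 :=
      ((hasDerivAt_pow 3 (0:ℂ)).const_mul _).const_add _
    simpa using h
  · intro a ha c hc h1 h2
    have hsq : a ^ 2 = c ^ 2 := by
      have hdiffeq : Complex.log w₁ + a ^ 2 = Complex.log w₁ + c ^ 2 := by
        apply exp_inj_small h1
        have : Complex.log w₁ + a ^ 2 - (Complex.log w₁ + c ^ 2) = a ^ 2 - c ^ 2 := by ring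
        rw [this]
        have ha2 : ‖a ^ 2‖ < 1 := by
          rw [norm_pow]
          have := abs_lt_one_of_mem ha
          nlinarith [norm_nonneg a]
        have hc2 : ‖c ^ 2‖ < 1 := by
          rw [norm_pow]
          have := abs_lt_one_of_mem hc
          nlinarith [norm_nonneg c]
        have htri : ‖a ^ 2 - c ^ 2‖ ≤ ‖a ^ 2‖ + ‖c ^ 2‖ := by
          have h := norm_add_le (a ^ 2) (-(c ^ 2))
          rw [norm_neg] at h
          simpa [sub_eq_add_neg] using h
        nlinarith [two_lt_two_pi]
      exact add_left_cancel hdiffeq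
    have hcu : a ^ 3 = c ^ 3 := by
      have h3 : (k : ℂ) * a ^ 3 = (k : ℂ) * c ^ 3 := add_left_cancel h2
      exact mul_left_cancel₀ hkne h3
    by_cases ha0 : a = 0
    · rw [ha0] at hsq ⊢
      have : c ^ 2 = 0 := by rw [← hsq]; ring
      exact (pow_eq_zero_iff (two_ne_zero)).mp this |>.symm
    · have ha2 : a ^ 2 ≠ 0 := pow_ne_zero 2 ha0
      have : a ^ 2 * a = a ^ 2 * c := by
        calc a ^ 2 * a = a ^ 3 := by ring
          _ = c ^ 3 := hcu
          _ = c ^ 2 * c := by ring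
          _ = a ^ 2 * c := by rw [hsq]
      exact mul_left_cancel₀ ha2 this

/-- If `D₁ ⊆ ℂ` is a domain biholomorphic to `ℂ∗ = ℂ \\ {0}`, then for every
domain `D₂ ⊆ ℂ`, `h_{D₁×D₂} ≡ κ_{D₁×D₂}`. -/
theorem stmt5 (D₁ : Set ℂ) (hD₁ : IsOpen D₁ ∧ IsConnected D₁)
    (hbh : Biholomorphic D₁ {(0 : ℂ)}ᶜ) :
    ∀ D₂ : Set ℂ, IsOpen D₂ ∧ IsConnected D₂ →
      ∀ z ∈ D₁ ×ˢ D₂, ∀ X : ℂ × ℂ,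
        hahn (D₁ ×ˢ D₂) z X = kobayashi (D₁ ×ˢ D₂) z X := by
  intro D₂ hD₂ z hz X
  obtain ⟨ψ, φ, hψd, hφd, hψm, hφm, hgf, hfg⟩ := hbh
  have hz1 : z.1 ∈ D₁ := (mem_prod.mp hz).1
  have hz2 : z.2 ∈ D₂ := (mem_prod.mp hz).2
  have hφinj : InjOn φ {(0:ℂ)}ᶜ := fun a ha b hb h => by
    rw [← hfg a ha, ← hfg b hb, h]
  set w₁ := ψ z.1 with hw₁def
  have hw₁ : w₁ ≠ 0 := by
    have := hψm hz1; simpa using this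
  have hw₁c : w₁ ∈ ({(0:ℂ)}ᶜ : Set ℂ) := by simpa using hw₁
  have hφw : φ w₁ = z.1 := hgf z.1 hz1
  have hexpu₀ : Complex.exp (Complex.log w₁) = w₁ := Complex.exp_log hw₁
  have hφat : DifferentiableAt ℂ φ w₁ :=
    hφd.differentiableAt (isOpen_compl_singleton.mem_nhds hw₁c)
  have hψat : DifferentiableAt ℂ ψ (φ w₁) := by
    rw [hφw]; exact hψd.differentiableAt (hD₁.1.mem_nhds hz1)
  have hchain : HasDerivAt (fun w => ψ (φ w)) (deriv ψ (φ w₁) * deriv φ w₁) w₁ :=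
    HasDerivAt.comp w₁ hψat.hasDerivAt hφat.hasDerivAt
  have hid : HasDerivAt (fun w => ψ (φ w)) 1 w₁ := by
    have hEq : (fun w : ℂ => ψ (φ w)) =ᶠ[nhds w₁] (fun w => w) := by
      filter_upwards [isOpen_compl_singleton.mem_nhds hw₁c] with w hw
      exact hfg w hw
    exact (hasDerivAt_id w₁).congr_of_eventuallyEq hEq
  have huniq : deriv ψ (φ w₁) * deriv φ w₁ = 1 := hchain.unique hid
  have hdφ : deriv φ w₁ ≠ 0 := by
    intro h; rw [h, mul_zero] at huniq; exact zero_ne_one huniq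
  obtain ⟨r₂, hr₂pos, hball⟩ := Metric.isOpen_iff.mp hD₂.1 z.2 hz2
  unfold hahn kobayashi
  congr 1
  ext r
  simp only [mem_setOf_eq]
  constructor
  · rintro ⟨α, f, h1, h2, h3, _, h5, h6⟩
    exact ⟨α, f, h1, h2, h3, h5, h6⟩
  · rintro ⟨α, f, habs, hdf, hmf, hf0, hXf⟩
    have hf' : HasDerivAt f (deriv f 0) 0 :=
      (hdf.differentiableAt (unitDisc_isOpen.mem_nhds zero_mem_unitDisc)).hasDerivAt
    set v := deriv f 0 with hvdef
    have hv2 : HasDerivAt (fun t => (f t).2) v.2 0 := by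
      simpa using hf'.hasFDerivAt.snd.hasDerivAt
    have key : ∃ (β : ℂ) (g : ℂ → ℂ × ℂ), ‖β‖ = ‖α‖ ∧
        DifferentiableOn ℂ g unitDisc ∧ MapsTo g unitDisc (D₁ ×ˢ D₂) ∧
        InjOn g unitDisc ∧ g 0 = z ∧ β • deriv g 0 = X := by
      by_cases hα0 : α = 0
      · refine caseB D₁ D₂ φ hφd hφm hφinj z X α w₁ hw₁ hφw hexpu₀ r₂ hr₂pos hball 1
          one_ne_zero ?_
        rw [hα0, zero_smul, ← hXf, hα0, zero_smul]
      · by_cases hv₂0 : v.2 = 0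
        · by_cases hv₁0 : v.1 = 0
          · refine caseC D₁ D₂ φ hφd hφm hφinj z X α w₁ hw₁ hφw hexpu₀ r₂ hr₂pos hball ?_
            have hv0 : v = 0 := Prod.ext hv₁0 hv₂0
            rw [← hXf, hv0, smul_zero]
          · refine caseB D₁ D₂ φ hφd hφm hφinj z X α w₁ hw₁ hφw hexpu₀ r₂ hr₂pos hball
              (v.1 / (deriv φ w₁ * w₁)) (div_ne_zero hv₁0 (mul_ne_zero hdφ hw₁)) ?_
            have hdiv : deriv φ w₁ * (w₁ * (v.1 / (deriv φ w₁ * w₁))) = v.1 := by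
              field_simp
            rw [← hXf, hdiv]
            congr 1
            exact Prod.ext rfl hv₂0.symm
        · -- Case A : v.2 ≠ 0
          have hb : deriv φ w₁ * (w₁ * (1 + (v.1 / (deriv φ w₁ * w₁) - 1) / v.2 * v.2)) = v.1 := by
            field_simp
            ring
          refine helper D₁ D₂ φ hφd hφm hφinj z X α w₁ hw₁ hφw
            (fun t => Complex.log w₁ +
              (t + ((v.1 / (deriv φ w₁ * w₁) - 1) / v.2) * ((f t).2 - z.2)))
            (fun t => (f t).2)
            (1 + ((v.1 / (deriv φ w₁ * w₁) - 1) / v.2) * v.2) v.2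
            ?_ hdf.snd (fun t ht => (mem_prod.mp (hmf ht)).2)
            (by simp [hf0, hexpu₀]) (by show (f 0).2 = z.2; rw [show (f 0).2 = z.2 from by rw [hf0]])
            ?_ hv2 ?_ ?_
          · apply DifferentiableOn.const_add
            apply DifferentiableOn.add differentiableOn_id
            exact (hdf.snd.sub (differentiableOn_const z.2)).const_mul _
          · apply HasDerivAt.const_add
            exact (hasDerivAt_id 0).add ((hv2.sub_const z.2).const_mul _)
          · intro a ha c hc hexpeq hqeq
            have hqeq' : (f a).2 = (f c).2 := hqeq
            beta_reduce at hexpeq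
            have hdiff : (Complex.log w₁ +
                (a + ((v.1 / (deriv φ w₁ * w₁) - 1) / v.2) * ((f a).2 - z.2)))
                - (Complex.log w₁ +
                (c + ((v.1 / (deriv φ w₁ * w₁) - 1) / v.2) * ((f c).2 - z.2)))
                = a - c := by
              rw [hqeq']; ring
            have hsmall := exp_inj_small hexpeq (by
              rw [hdiff]
              exact lt_trans (diff_lt_two ha hc) two_lt_two_pi)
            have hzero : a - c = 0 := by rw [← hdiff, hsmall, sub_self]
            exact sub_eq_zero.mp hzero
          · rw [← hXf, hb]
    obtain ⟨β, g, hβ, h2, h3, h4, h5, h6⟩ := key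
    exact ⟨β, g, by rw [hβ, habs], h2, h3, h4, h5, h6⟩
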